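/- Let L be a 2×2 operator matrix function on Ω in H = H₁ ⊕ H₂ and let λ ∈ Ω satisfy: λ ∈ σ_ap(L); A(λ) and D(λ) are boundedly invertible; dom A(λ) ⊆ dom C(λ) and C(λ) is A(λ)-bounded; dom D(λ) ⊆ dom B(λ) and B(λ) is D(λ)-bounded. Then λ ∈ σ_ap(S₁) ∪ σ_ap(S₂). -/

import Mathlib

open Filter Topology

noncomputable section

variable {H₁ H₂ : Type*}
  [NormedAddCommGroup H₁] [InnerProductSpace ℂ H₁] [CompleteSpace H₁]
  [NormedAddCommGroup H₂] [InnerProductSpace ℂ H₂] [CompleteSpace H₂]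

/-- `R` is a bounded, everywhere defined inverse of the partially defined operator `S`. -/
def IsBddInv {K₁ K₂ : Type*} [NormedAddCommGroup K₁] [NormedSpace ℂ K₁]
    [NormedAddCommGroup K₂] [NormedSpace ℂ K₂]
    (S : K₁ →ₗ.[ℂ] K₂) (R : K₂ →L[ℂ] K₁) : Prop :=
  (∀ v : S.domain, R (S v) = v) ∧ ∀ h : K₂, ∃ hm : R h ∈ S.domain, S ⟨R h, hm⟩ = h

set_option linter.unusedSectionVars false in
lemma schur_aux {K₁ K₂ : Type*} [NormedAddCommGroup K₁] [NormedSpace ℂ K₁]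
    [NormedAddCommGroup K₂] [NormedSpace ℂ K₂]
    (A : K₁ →ₗ.[ℂ] K₁) (B : K₂ →ₗ.[ℂ] K₁) (C : K₁ →ₗ.[ℂ] K₂) (D : K₂ →ₗ.[ℂ] K₂)
    (RD : K₂ →L[ℂ] K₂) (hRD : IsBddInv D RD)
    (hDB : (D.domain : Set K₂) ⊆ B.domain)
    (hBbd : ∃ a b : ℝ, 0 ≤ a ∧ 0 ≤ b ∧ ∀ (g : K₂) (hg : g ∈ D.domain),
      ‖B ⟨g, hDB hg⟩‖ ≤ a * ‖g‖ + b * ‖D ⟨g, hg⟩‖)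
    (f : ℕ → K₁) (g : ℕ → K₂)
    (hfA : ∀ n, f n ∈ A.domain) (hfC : ∀ n, f n ∈ C.domain)
    (hgB : ∀ n, g n ∈ B.domain) (hgD : ∀ n, g n ∈ D.domain)
    (hu : Tendsto (fun n => A ⟨f n, hfA n⟩ + B ⟨g n, hgB n⟩) atTop (𝓝 0))
    (hv : Tendsto (fun n => C ⟨f n, hfC n⟩ + D ⟨g n, hgD n⟩) atTop (𝓝 0))
    (hfreq : ∃ᶠ n in atTop, (1:ℝ)/2 ≤ ‖f n‖ ^ 2) :
    ∃ (f' : ℕ → K₁) (hfA' : ∀ n, f' n ∈ A.domain) (hfC' : ∀ n, f' n ∈ C.domain)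
      (hB : ∀ n, RD (C ⟨f' n, hfC' n⟩) ∈ B.domain),
      (∀ n, ‖f' n‖ = 1) ∧
      Tendsto (fun n => A ⟨f' n, hfA' n⟩
        - B ⟨RD (C ⟨f' n, hfC' n⟩), hB n⟩) atTop (𝓝 0) := by
  -- membership of RD h in B.domain for every h
  have memD : ∀ h : K₂, RD h ∈ D.domain := fun h => (hRD.2 h).1
  have memB : ∀ h : K₂, RD h ∈ B.domain := fun h => hDB (memD h)
  set v : ℕ → K₂ := fun n => C ⟨f n, hfC n⟩ + D ⟨g n, hgD n⟩ with hv_def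
  -- key identity : RD (v n) = RD (C f n) + g n
  have hRDv : ∀ n, RD (v n) = RD (C ⟨f n, hfC n⟩) + g n := by
    intro n
    have := hRD.1 ⟨g n, hgD n⟩
    simp only [hv_def, map_add, this]
  -- B (RD (v n)) → 0
  obtain ⟨a, b, ha, hb, hbd⟩ := hBbd
  have hBRDv : Tendsto (fun n => B ⟨RD (v n), memB (v n)⟩) atTop (𝓝 0) := by
    have hvn : Tendsto (fun n => ‖v n‖) atTop (𝓝 0) := by
      simpa using hv.norm
    have hbound : Tendsto (fun n => (a * ‖RD‖ + b) * ‖v n‖) atTop (𝓝 0) := by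
      simpa using hvn.const_mul (a * ‖RD‖ + b)
    refine squeeze_zero_norm (fun n => ?_) hbound
    have h1 := hbd (RD (v n)) (memD (v n))
    have h2 : D ⟨RD (v n), memD (v n)⟩ = v n := by
      have := (hRD.2 (v n)).2
      convert this using 2
    have h3 : ‖RD (v n)‖ ≤ ‖RD‖ * ‖v n‖ := RD.le_opNorm _
    calc ‖B ⟨RD (v n), memB (v n)⟩‖ ≤ a * ‖RD (v n)‖ + b * ‖D ⟨RD (v n), memD (v n)⟩‖ := h1
      _ ≤ a * (‖RD‖ * ‖v n‖) + b * ‖v n‖ := by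
          rw [h2]; gcongr
      _ = (a * ‖RD‖ + b) * ‖v n‖ := by ring
  -- w n := A f n - B (RD (C f n)) tends to 0
  have hw : Tendsto (fun n => A ⟨f n, hfA n⟩ - B ⟨RD (C ⟨f n, hfC n⟩), memB _⟩)
      atTop (𝓝 0) := by
    have key : ∀ n, A ⟨f n, hfA n⟩ - B ⟨RD (C ⟨f n, hfC n⟩), memB _⟩
        = (A ⟨f n, hfA n⟩ + B ⟨g n, hgB n⟩) - B ⟨RD (v n), memB (v n)⟩ := by
      intro n
      have hsub : (⟨RD (C ⟨f n, hfC n⟩), memB _⟩ : B.domain)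
          = (⟨RD (v n), memB (v n)⟩ : B.domain) - ⟨g n, hgB n⟩ := by
        ext
        simp [hRDv n]
      rw [hsub, B.map_sub]
      abel
    simp only [key]
    simpa using hu.sub hBRDv
  -- extract subsequence where ‖f n‖² ≥ 1/2
  obtain ⟨φ, hφmono, hφ⟩ := extraction_of_frequently_atTop hfreq
  have hfpos : ∀ n, (1:ℝ)/2 ≤ ‖f (φ n)‖ := by
    intro n
    nlinarith [hφ n, norm_nonneg (f (φ n))]
  have hfne : ∀ n, ‖f (φ n)‖ ≠ 0 := fun n => by
    have := hfpos n; positivity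
  set c : ℕ → ℂ := fun n => ((‖f (φ n)‖ : ℝ) : ℂ)⁻¹ with hc_def
  refine ⟨fun n => c n • f (φ n),
    fun n => A.domain.smul_mem _ (hfA _), fun n => C.domain.smul_mem _ (hfC _),
    fun n => memB _, fun n => ?_, ?_⟩
  · simp [hc_def, norm_smul, inv_mul_cancel₀ (hfne n)]
  · -- the target equals c n • w (φ n)
    have key : ∀ n, A ⟨c n • f (φ n), A.domain.smul_mem _ (hfA _)⟩
        - B ⟨RD (C ⟨c n • f (φ n), C.domain.smul_mem _ (hfC _)⟩), memB _⟩
        = c n • (A ⟨f (φ n), hfA _⟩ - B ⟨RD (C ⟨f (φ n), hfC _⟩), memB _⟩) := by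
      intro n
      have e1 : (⟨c n • f (φ n), A.domain.smul_mem _ (hfA _)⟩ : A.domain)
          = c n • (⟨f (φ n), hfA _⟩ : A.domain) := rfl
      have e2 : (⟨c n • f (φ n), C.domain.smul_mem _ (hfC _)⟩ : C.domain)
          = c n • (⟨f (φ n), hfC _⟩ : C.domain) := rfl
      have e3 : RD (C ⟨c n • f (φ n), C.domain.smul_mem _ (hfC _)⟩)
          = c n • RD (C ⟨f (φ n), hfC _⟩) := by
        rw [e2, C.map_smul, map_smul]
      have e4 : (⟨RD (C ⟨c n • f (φ n), C.domain.smul_mem _ (hfC _)⟩), memB _⟩ : B.domain)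
          = c n • (⟨RD (C ⟨f (φ n), hfC _⟩), memB _⟩ : B.domain) := by
        ext; simp [e3]
      rw [e1, e4, A.map_smul, B.map_smul, smul_sub]
    simp only [key]
    have hwφ := (hw.comp hφmono.tendsto_atTop).norm
    have hbound : Tendsto (fun n => 2 * ‖A ⟨f (φ n), hfA _⟩
        - B ⟨RD (C ⟨f (φ n), hfC _⟩), memB _⟩‖) atTop (𝓝 0) := by
      simpa using hwφ.const_mul 2
    refine squeeze_zero_norm (fun n => ?_) hbound
    rw [norm_smul]
    have hcle : ‖c n‖ ≤ 2 := by
      have h1 := hfpos n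
      have : ‖c n‖ = ‖f (φ n)‖⁻¹ := by
        simp [hc_def, abs_of_nonneg (norm_nonneg _)]
      rw [this]
      rw [inv_le_comm₀ (by linarith) (by norm_num)]
      linarith
    gcongr

/-- If `λ ∈ σ_ap(L)`, `A(λ)` and `D(λ)` are boundedly invertible, `C(λ)` is
`A(λ)`-bounded and `B(λ)` is `D(λ)`-bounded, then `λ` lies in the approximate point
spectrum of one of the Schur complements `S₁(λ) = A − B D⁻¹ C` or
`S₂(λ) = D − C A⁻¹ B`. -/
theorem sigmaAp_mem_schur_of_diagonally_dominant
    (Ω : Set ℂ) (A : ℂ → H₁ →ₗ.[ℂ] H₁) (B : ℂ → H₂ →ₗ.[ℂ] H₁)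
    (C : ℂ → H₁ →ₗ.[ℂ] H₂) (D : ℂ → H₂ →ₗ.[ℂ] H₂)
    (l : ℂ) (hl : l ∈ Ω)
    (hap : ∃ (f : ℕ → H₁) (g : ℕ → H₂) (hfA : ∀ n, f n ∈ (A l).domain)
      (hfC : ∀ n, f n ∈ (C l).domain) (hgB : ∀ n, g n ∈ (B l).domain)
      (hgD : ∀ n, g n ∈ (D l).domain),
      (∀ n, ‖(WithLp.equiv 2 (H₁ × H₂)).symm (f n, g n)‖ = 1) ∧
      Tendsto (fun n => (WithLp.equiv 2 (H₁ × H₂)).symm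
        ((A l) ⟨f n, hfA n⟩ + (B l) ⟨g n, hgB n⟩,
          (C l) ⟨f n, hfC n⟩ + (D l) ⟨g n, hgD n⟩)) atTop (𝓝 0))
    (RA : H₁ →L[ℂ] H₁) (hRA : IsBddInv (A l) RA)
    (RD : H₂ →L[ℂ] H₂) (hRD : IsBddInv (D l) RD)
    (hAC : ((A l).domain : Set H₁) ⊆ ((C l).domain : Set H₁))
    (hCbd : ∃ a b : ℝ, 0 ≤ a ∧ 0 ≤ b ∧ ∀ (f : H₁) (hf : f ∈ (A l).domain),
      ‖(C l) ⟨f, hAC hf⟩‖ ≤ a * ‖f‖ + b * ‖(A l) ⟨f, hf⟩‖)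
    (hDB : ((D l).domain : Set H₂) ⊆ ((B l).domain : Set H₂))
    (hBbd : ∃ a b : ℝ, 0 ≤ a ∧ 0 ≤ b ∧ ∀ (g : H₂) (hg : g ∈ (D l).domain),
      ‖(B l) ⟨g, hDB hg⟩‖ ≤ a * ‖g‖ + b * ‖(D l) ⟨g, hg⟩‖) :
    (∃ (f : ℕ → H₁) (hfA : ∀ n, f n ∈ (A l).domain) (hfC : ∀ n, f n ∈ (C l).domain)
      (hB : ∀ n, RD ((C l) ⟨f n, hfC n⟩) ∈ (B l).domain),
      (∀ n, ‖f n‖ = 1) ∧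
      Tendsto (fun n => (A l) ⟨f n, hfA n⟩
        - (B l) ⟨RD ((C l) ⟨f n, hfC n⟩), hB n⟩) atTop (𝓝 0)) ∨
    (∃ (g : ℕ → H₂) (hgB : ∀ n, g n ∈ (B l).domain) (hgD : ∀ n, g n ∈ (D l).domain)
      (hC : ∀ n, RA ((B l) ⟨g n, hgB n⟩) ∈ (C l).domain),
      (∀ n, ‖g n‖ = 1) ∧
      Tendsto (fun n => (D l) ⟨g n, hgD n⟩
        - (C l) ⟨RA ((B l) ⟨g n, hgB n⟩), hC n⟩) atTop (𝓝 0)) := by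
  obtain ⟨f, g, hfA, hfC, hgB, hgD, hnorm, htend⟩ := hap
  set u : ℕ → H₁ := fun n => (A l) ⟨f n, hfA n⟩ + (B l) ⟨g n, hgB n⟩ with hu_def
  set v : ℕ → H₂ := fun n => (C l) ⟨f n, hfC n⟩ + (D l) ⟨g n, hgD n⟩ with hv_def
  have hpair : Tendsto (fun n => ‖(WithLp.equiv 2 (H₁ × H₂)).symm (u n, v n)‖)
      atTop (𝓝 0) := by simpa using htend.norm
  have hcomp : ∀ n, ‖u n‖ ≤ ‖(WithLp.equiv 2 (H₁ × H₂)).symm (u n, v n)‖ ∧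
      ‖v n‖ ≤ ‖(WithLp.equiv 2 (H₁ × H₂)).symm (u n, v n)‖ := by
    intro n
    have h := WithLp.prod_norm_sq_eq_of_L2 ((WithLp.equiv 2 (H₁ × H₂)).symm (u n, v n))
    erw [WithLp.toLp_fst, WithLp.toLp_snd] at h
    constructor <;>
      nlinarith [norm_nonneg (u n), norm_nonneg (v n),
        norm_nonneg ((WithLp.equiv 2 (H₁ × H₂)).symm (u n, v n))]
  have hu : Tendsto u atTop (𝓝 0) :=
    squeeze_zero_norm (fun n => (hcomp n).1) hpair
  have hv : Tendsto v atTop (𝓝 0) :=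
    squeeze_zero_norm (fun n => (hcomp n).2) hpair
  have hnorm2 : ∀ n, ‖f n‖ ^ 2 + ‖g n‖ ^ 2 = 1 := by
    intro n
    have h := WithLp.prod_norm_sq_eq_of_L2 ((WithLp.equiv 2 (H₁ × H₂)).symm (f n, g n))
    erw [WithLp.toLp_fst, WithLp.toLp_snd, hnorm n] at h
    simpa using h.symm
  have hsplit : (∃ᶠ n in atTop, (1:ℝ)/2 ≤ ‖f n‖ ^ 2) ∨
      (∃ᶠ n in atTop, (1:ℝ)/2 ≤ ‖g n‖ ^ 2) := by
    rw [← Filter.frequently_or_distrib]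
    refine Filter.Eventually.frequently (Filter.Eventually.of_forall fun n => ?_)
    have := hnorm2 n
    by_contra h
    push_neg at h
    linarith [h.1, h.2]
  rcases hsplit with hfreq | hfreq
  · exact Or.inl (schur_aux (A l) (B l) (C l) (D l) RD hRD hDB hBbd f g
      hfA hfC hgB hgD hu hv hfreq)
  · have hu' : Tendsto (fun n => (B l) ⟨g n, hgB n⟩ + (A l) ⟨f n, hfA n⟩) atTop (𝓝 0) := by
      simpa [hu_def, add_comm] using hu
    have hv' : Tendsto (fun n => (D l) ⟨g n, hgD n⟩ + (C l) ⟨f n, hfC n⟩) atTop (𝓝 0) := by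
      simpa [hv_def, add_comm] using hv
    obtain ⟨g', h1, h2, h3, h4, h5⟩ := schur_aux (D l) (C l) (B l) (A l) RA hRA hAC hCbd g f
      hgD hgB hfC hfA hv' hu' hfreq
    exact Or.inr ⟨g', h2, h1, h3, h4, h5⟩

end
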